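/- (Feedback shift importance weighting consistency.) Let X be a countable (or finite) input space, and let C and Y be {0,1}-valued random variables where C indicates true conversion and Y indicates conversion observed during the training term. Assume P(Y = y | X = x) > 0 for all x with P(X = x) > 0 and y ∈ {0,1}. Then for any hypothesis h and loss ℓ, E_{(x,y)}[ (P(C = y | X = x)/P(Y = y | X = x)) · ℓ(h(x), y) ] = E_{(x,c)}[ℓ(h(x), c)], where the left expectation is over the joint law of (X, Y) and the right over the joint law of (X, C); i.e., FSIW-weighted empirical risk is an unbiased estimate of the risk with respect to true conversions. -/

import Mathlib

open MeasureTheory ProbabilityTheory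
open scoped ENNReal NNReal

/-- Consistency of feedback shift importance weighting (FSIW): on a countable input space, with
`C` the true-conversion indicator and `Y` the training-term observed-conversion indicator, if
`P(Y = y | X = x) > 0` whenever `P(X = x) > 0`, then weighting by
`w(x, y) = P(C = y | X = x) / P(Y = y | X = x) = P(X = x, C = y) / P(X = x, Y = y)` gives
`E_{(x,y)}[w(x,y) ℓ(h(x), y)] = E_{(x,c)}[ℓ(h(x), c)]`. -/
theorem fsiw_unbiased
    {Ω X : Type*} [MeasurableSpace Ω]
    [MeasurableSpace X] [MeasurableSingletonClass X] [Countable X]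
    (P : Measure Ω) [IsProbabilityMeasure P]
    (x : Ω → X) (Yv Cv : Ω → Bool)
    (hx : Measurable x) (hYv : Measurable Yv) (hCv : Measurable Cv)
    (hpos : ∀ (a : X) (b : Bool),
      0 < P (x ⁻¹' {a}) → 0 < P (x ⁻¹' {a} ∩ Yv ⁻¹' {b}))
    (h : X → ℝ) (hh : Measurable h)
    (ℓ : ℝ → Bool → ℝ) (hℓ : Measurable fun z : ℝ × Bool => ℓ z.1 z.2)
    (C : ℝ) (hC : ∀ r b, |ℓ r b| ≤ C) :
    ∫ ω, ((P (x ⁻¹' {x ω} ∩ Cv ⁻¹' {Yv ω})).toReal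
            / (P (x ⁻¹' {x ω} ∩ Yv ⁻¹' {Yv ω})).toReal) * ℓ (h (x ω)) (Yv ω) ∂P
      = ∫ ω, ℓ (h (x ω)) (Cv ω) ∂P := by
  classical
  set f : X × Bool → ℝ := fun p =>
    (P (x ⁻¹' {p.1} ∩ Cv ⁻¹' {p.2})).toReal / (P (x ⁻¹' {p.1} ∩ Yv ⁻¹' {p.2})).toReal
      * ℓ (h p.1) p.2 with hf
  set g : X × Bool → ℝ := fun p => ℓ (h p.1) p.2 with hg
  have hxY : Measurable fun ω => (x ω, Yv ω) := hx.prodMk hYv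
  have hxC : Measurable fun ω => (x ω, Cv ω) := hx.prodMk hCv
  set μ := P.map (fun ω => (x ω, Yv ω)) with hμ
  set ν := P.map (fun ω => (x ω, Cv ω)) with hν
  have hνP : IsProbabilityMeasure ν := Measure.isProbabilityMeasure_map hxC.aemeasurable
  have hμs : ∀ p : X × Bool, μ {p} = P (x ⁻¹' {p.1} ∩ Yv ⁻¹' {p.2}) := by
    intro p
    rw [hμ, Measure.map_apply hxY (measurableSet_singleton p)]
    congr 1
    ext ω
    simp [Prod.ext_iff, eq_comm]
  have hνs : ∀ p : X × Bool, ν {p} = P (x ⁻¹' {p.1} ∩ Cv ⁻¹' {p.2}) := by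
    intro p
    rw [hν, Measure.map_apply hxC (measurableSet_singleton p)]
    congr 1
    ext ω
    simp [Prod.ext_iff, eq_comm]
  have hfm : Measurable f := measurable_of_countable f
  have hgm : Measurable g := measurable_of_countable g
  -- key pointwise identity
  have key : ∀ p : X × Bool, (μ {p}).toReal • f p = (ν {p}).toReal • g p := by
    intro p
    rw [hμs, hνs, hf, hg]
    simp only [smul_eq_mul]
    by_cases hzero : P (x ⁻¹' {p.1}) = 0
    · have h1 : P (x ⁻¹' {p.1} ∩ Yv ⁻¹' {p.2}) = 0 :=
        le_antisymm (hzero ▸ measure_mono Set.inter_subset_left) (zero_le)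
      have h2 : P (x ⁻¹' {p.1} ∩ Cv ⁻¹' {p.2}) = 0 :=
        le_antisymm (hzero ▸ measure_mono Set.inter_subset_left) (zero_le)
      simp [h1, h2]
    · have hY : 0 < P (x ⁻¹' {p.1} ∩ Yv ⁻¹' {p.2}) :=
        hpos p.1 p.2 (pos_iff_ne_zero.mpr hzero)
      have hYt : 0 < (P (x ⁻¹' {p.1} ∩ Yv ⁻¹' {p.2})).toReal :=
        ENNReal.toReal_pos hY.ne' (measure_ne_top _ _)
      field_simp
  have hCnn : 0 ≤ C := le_trans (abs_nonneg _) (hC 0 true)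
  -- integrability of g w.r.t. ν
  have hgint : Integrable g ν := by
    refine (integrable_const C).mono' hgm.aestronglyMeasurable ?_
    filter_upwards with p
    simpa [hg, abs_of_nonneg hCnn] using hC (h p.1) p.2
  -- integrability of f w.r.t. μ
  have hfint : Integrable f μ := by
    refine ⟨hfm.aestronglyMeasurable, ?_⟩
    rw [HasFiniteIntegral, lintegral_countable']
    have hterm : ∀ p : X × Bool, (‖f p‖₊ : ℝ≥0∞) * μ {p} ≤ ν {p} * ENNReal.ofReal C := by
      intro p
      have e1 : (‖f p‖₊ : ℝ≥0∞) * μ {p}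
          = ENNReal.ofReal (|(μ {p}).toReal • f p|) := by
        rw [← enorm_eq_nnnorm, ← ofReal_norm, ← ENNReal.ofReal_toReal (measure_ne_top μ {p}),
          ← ENNReal.ofReal_mul (norm_nonneg _)]
        congr 1
        simp [Real.norm_eq_abs, abs_mul, abs_of_nonneg ENNReal.toReal_nonneg, mul_comm]
      rw [e1, key p]
      calc ENNReal.ofReal (|(ν {p}).toReal • g p|)
          ≤ ENNReal.ofReal ((ν {p}).toReal * C) := by
            apply ENNReal.ofReal_le_ofReal
            rw [smul_eq_mul, abs_mul, abs_of_nonneg (ENNReal.toReal_nonneg)]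
            exact mul_le_mul_of_nonneg_left (by simpa [hg] using hC (h p.1) p.2)
              ENNReal.toReal_nonneg
        _ = ν {p} * ENNReal.ofReal C := by
            rw [ENNReal.ofReal_mul ENNReal.toReal_nonneg,
              ENNReal.ofReal_toReal (measure_ne_top ν _)]
    calc ∑' p : X × Bool, (‖f p‖₊ : ℝ≥0∞) * μ {p}
        ≤ ∑' p : X × Bool, ν {p} * ENNReal.ofReal C := ENNReal.tsum_le_tsum hterm
      _ = (∑' p : X × Bool, ν {p}) * ENNReal.ofReal C := ENNReal.tsum_mul_right
      _ = ν Set.univ * ENNReal.ofReal C := by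
          congr 1
          simpa using Measure.tsum_indicator_apply_singleton ν Set.univ MeasurableSet.univ
      _ < ⊤ := by simp [measure_lt_top, ENNReal.mul_lt_top, ENNReal.ofReal_lt_top]
  have hL : (∫ ω, ((P (x ⁻¹' {x ω} ∩ Cv ⁻¹' {Yv ω})).toReal
            / (P (x ⁻¹' {x ω} ∩ Yv ⁻¹' {Yv ω})).toReal) * ℓ (h (x ω)) (Yv ω) ∂P)
      = ∫ p, f p ∂μ := by
    rw [hμ, integral_map hxY.aemeasurable hfm.aestronglyMeasurable]
  have hR : (∫ ω, ℓ (h (x ω)) (Cv ω) ∂P) = ∫ p, g p ∂ν := by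
    rw [hν, integral_map hxC.aemeasurable hgm.aestronglyMeasurable]
  rw [hL, hR, integral_countable' hfint, integral_countable' hgint]
  exact tsum_congr key
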